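/- Let n be a positive integer, k a positive integer with gcd(k, n) = 1, and a, b, c elements of L = GF(2^n). Define G(u) = a u^{2^k+1} + b u^{2^{3k}+1} + b^{2^{-k}} u^{2^{2k}+2^{-k}} + b^{2^{-2k}} u^{2^k+2^{-2k}} + c u^{2^{5k}+1} + c^{2^{-k}} u^{2^{4k}+2^{-k}} + c^{2^{-2k}} u^{2^{3k}+2^{-2k}} + c^{2^{-3k}} u^{2^{2k}+2^{-3k}} + c^{2^{-4k}} u^{2^k+2^{-4k}} and L(u) = a u^{2^k} + a^{2^{-k}} u^{2^{-k}} + b u^{2^{3k}} + b^{2^{-3k}} u^{2^{-3k}} + c u^{2^{5k}} + c^{2^{-5k}} u^{2^{-5k}}. Then for every u in L, L(u) = 0 if and only if G(u) = 0 or G(u) = 1. -/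

import Mathlib

/-- `ipow j x` is `x^{2^{-j}}`, the unique element of `GF(2^n)` whose `2^j`-th power is `x`
(the inverse of the `j`-th iterate of the Frobenius automorphism). -/
noncomputable def ipow {n : ℕ} (j : ℕ) (x : GaloisField 2 n) : GaloisField 2 n :=
  Function.invFun (fun y : GaloisField 2 n => y ^ 2 ^ j) x

lemma frob_inj {n : ℕ} (j : ℕ) :
    Function.Injective (fun y : GaloisField 2 n => y ^ 2 ^ j) := by
  intro x y h
  simp only at h
  have h0 : (x - y) ^ 2 ^ j = 0 := by rw [sub_pow_char_pow, h, sub_self]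
  exact sub_eq_zero.mp (pow_eq_zero_iff (pow_ne_zero j (two_ne_zero)) |>.mp h0)

lemma frob_surj {n : ℕ} (j : ℕ) :
    Function.Surjective (fun y : GaloisField 2 n => y ^ 2 ^ j) :=
  Finite.injective_iff_surjective.mp (frob_inj j)

lemma ipow_pow {n : ℕ} (j : ℕ) (x : GaloisField 2 n) : (ipow j x) ^ 2 ^ j = x :=
  Function.invFun_eq (frob_surj j x)

lemma ipow_pow_add {n : ℕ} (j m : ℕ) (x : GaloisField 2 n) :
    (ipow j x) ^ 2 ^ (j + m) = x ^ 2 ^ m := by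
  rw [pow_add, pow_mul, ipow_pow]

lemma ipow_zero {n : ℕ} (j : ℕ) : ipow j (0 : GaloisField 2 n) = 0 := by
  apply frob_inj j
  simp only
  rw [ipow_pow, zero_pow (pow_ne_zero j two_ne_zero)]

lemma fixed_aux {n : ℕ} (hn : 0 < n) {k : ℕ} (hkn : Nat.gcd k n = 1)
    (x : GaloisField 2 n) (h : x ^ 2 ^ k = x) : x = 0 ∨ x = 1 := by
  haveI : Fintype (GaloisField 2 n) := Fintype.ofFinite _
  have hxk : ∀ m, x ^ 2 ^ (m * k) = x := by
    intro m
    induction m with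
    | zero => simp
    | succ m ih =>
      rw [show (m + 1) * k = m * k + k by ring, pow_add, pow_mul, ih, h]
  have hcard : x ^ (2 : ℕ) ^ n = x := by
    have hc := FiniteField.pow_card x
    rwa [← Nat.card_eq_fintype_card, GaloisField.card 2 n hn.ne'] at hc
  have hxn : ∀ m, x ^ 2 ^ (m * n) = x := by
    intro m
    induction m with
    | zero => simp
    | succ m ih =>
      rw [show (m + 1) * n = m * n + n by ring, pow_add, pow_mul, ih, hcard]
  have hsq : x ^ 2 = x := by
    rcases eq_or_lt_of_le (show 1 ≤ n from hn) with h1 | h1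
    · have h1' : n = 1 := h1.symm
      subst h1'
      simpa using hcard
    · obtain ⟨m, -, hm⟩ := Nat.exists_mul_mod_eq_one_of_coprime hkn h1
      have hdm := Nat.div_add_mod (k * m) n
      set q := k * m / n with hq
      have hc1 : m * k = k * m := mul_comm m k
      have hc2 : q * n = n * q := mul_comm q n
      have hqe : m * k = q * n + 1 := by omega
      calc x ^ 2 = (x ^ 2 ^ (q * n)) ^ 2 := by rw [hxn]
        _ = x ^ 2 ^ (q * n + 1) := by rw [← pow_mul, ← pow_succ]
        _ = x ^ 2 ^ (m * k) := by rw [hqe]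
        _ = x := hxk m
  have hz : x * (x - 1) = 0 := by linear_combination hsq
  rcases mul_eq_zero.mp hz with h0 | h0
  · exact Or.inl h0
  · exact Or.inr (sub_eq_zero.mp h0)

/-- For `gcd(k,n) = 1`: `L(u) = 0` if and only if `G(u) = 0` or `G(u) = 1`. -/
theorem stmt_13 (n k : ℕ) (hn : 0 < n) (hk : 0 < k) (hkn : Nat.gcd k n = 1)
    (a b c : GaloisField 2 n) (u : GaloisField 2 n) :
    (a * u ^ 2 ^ k + ipow k a * ipow k u + b * u ^ 2 ^ (3 * k) +
        ipow (3 * k) b * ipow (3 * k) u + c * u ^ 2 ^ (5 * k) +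
        ipow (5 * k) c * ipow (5 * k) u) = 0 ↔
      (a * u ^ (2 ^ k + 1) + b * u ^ (2 ^ (3 * k) + 1) +
        ipow k b * (u ^ 2 ^ (2 * k) * ipow k u) +
        ipow (2 * k) b * (u ^ 2 ^ k * ipow (2 * k) u) +
        c * u ^ (2 ^ (5 * k) + 1) +
        ipow k c * (u ^ 2 ^ (4 * k) * ipow k u) +
        ipow (2 * k) c * (u ^ 2 ^ (3 * k) * ipow (2 * k) u) +
        ipow (3 * k) c * (u ^ 2 ^ (2 * k) * ipow (3 * k) u) +
        ipow (4 * k) c * (u ^ 2 ^ k * ipow (4 * k) u)) = 0 ∨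
        (a * u ^ (2 ^ k + 1) + b * u ^ (2 ^ (3 * k) + 1) +
        ipow k b * (u ^ 2 ^ (2 * k) * ipow k u) +
        ipow (2 * k) b * (u ^ 2 ^ k * ipow (2 * k) u) +
        c * u ^ (2 ^ (5 * k) + 1) +
        ipow k c * (u ^ 2 ^ (4 * k) * ipow k u) +
        ipow (2 * k) c * (u ^ 2 ^ (3 * k) * ipow (2 * k) u) +
        ipow (3 * k) c * (u ^ 2 ^ (2 * k) * ipow (3 * k) u) +
        ipow (4 * k) c * (u ^ 2 ^ k * ipow (4 * k) u)) = 1 := by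
  have h2 : (2 : GaloisField 2 n) = 0 := CharTwo.two_eq_zero
  by_cases hu : u = 0
  · subst hu
    simp [ipow_zero, zero_pow, pow_eq_zero_iff]
  · set G := (a * u ^ (2 ^ k + 1) + b * u ^ (2 ^ (3 * k) + 1) +
        ipow k b * (u ^ 2 ^ (2 * k) * ipow k u) +
        ipow (2 * k) b * (u ^ 2 ^ k * ipow (2 * k) u) +
        c * u ^ (2 ^ (5 * k) + 1) +
        ipow k c * (u ^ 2 ^ (4 * k) * ipow k u) +
        ipow (2 * k) c * (u ^ 2 ^ (3 * k) * ipow (2 * k) u) +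
        ipow (3 * k) c * (u ^ 2 ^ (2 * k) * ipow (3 * k) u) +
        ipow (4 * k) c * (u ^ 2 ^ k * ipow (4 * k) u)) with hG
    set Lu := (a * u ^ 2 ^ k + ipow k a * ipow k u + b * u ^ 2 ^ (3 * k) +
        ipow (3 * k) b * ipow (3 * k) u + c * u ^ 2 ^ (5 * k) +
        ipow (5 * k) c * ipow (5 * k) u) with hLu
    -- helper ipow power computations
    have i61 : ∀ x : GaloisField 2 n, (ipow k x) ^ 2 ^ (6 * k) = x ^ 2 ^ (5 * k) := fun x => by
      rw [show 6 * k = k + 5 * k by ring, ipow_pow_add]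
    have i62 : ∀ x : GaloisField 2 n, (ipow (2 * k) x) ^ 2 ^ (6 * k) = x ^ 2 ^ (4 * k) := fun x => by
      rw [show 6 * k = 2 * k + 4 * k by ring, ipow_pow_add]
    have i63 : ∀ x : GaloisField 2 n, (ipow (3 * k) x) ^ 2 ^ (6 * k) = x ^ 2 ^ (3 * k) := fun x => by
      rw [show 6 * k = 3 * k + 3 * k by ring, ipow_pow_add]
    have i64 : ∀ x : GaloisField 2 n, (ipow (4 * k) x) ^ 2 ^ (6 * k) = x ^ 2 ^ (2 * k) := fun x => by
      rw [show 6 * k = 4 * k + 2 * k by ring, ipow_pow_add]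
    have i65 : ∀ x : GaloisField 2 n, (ipow (5 * k) x) ^ 2 ^ (6 * k) = x ^ 2 ^ k := fun x => by
      rw [show 6 * k = 5 * k + k by ring, ipow_pow_add]
    have i51 : ∀ x : GaloisField 2 n, (ipow k x) ^ 2 ^ (5 * k) = x ^ 2 ^ (4 * k) := fun x => by
      rw [show 5 * k = k + 4 * k by ring, ipow_pow_add]
    have i52 : ∀ x : GaloisField 2 n, (ipow (2 * k) x) ^ 2 ^ (5 * k) = x ^ 2 ^ (3 * k) := fun x => by
      rw [show 5 * k = 2 * k + 3 * k by ring, ipow_pow_add]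
    have i53 : ∀ x : GaloisField 2 n, (ipow (3 * k) x) ^ 2 ^ (5 * k) = x ^ 2 ^ (2 * k) := fun x => by
      rw [show 5 * k = 3 * k + 2 * k by ring, ipow_pow_add]
    have i54 : ∀ x : GaloisField 2 n, (ipow (4 * k) x) ^ 2 ^ (5 * k) = x ^ 2 ^ k := fun x => by
      rw [show 5 * k = 4 * k + k by ring, ipow_pow_add]
    have key : u ^ 2 ^ (6 * k) * Lu ^ 2 ^ (6 * k) = G ^ 2 ^ (6 * k) + G ^ 2 ^ (5 * k) := by
      rw [hLu, hG]
      simp only [pow_add, pow_one]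
      simp only [add_pow_char_pow, mul_pow]
      simp only [i61, i62, i63, i64, i65, i51, i52, i53, i54]
      simp only [← pow_mul, ← Nat.pow_add]
      simp only [show k + 6 * k = 7 * k by ring, show 3 * k + 6 * k = 9 * k by ring,
        show 5 * k + 6 * k = 11 * k by ring, show k + 5 * k = 6 * k by ring,
        show 3 * k + 5 * k = 8 * k by ring, show 2 * k + 5 * k = 7 * k by ring,
        show 4 * k + 5 * k = 9 * k by ring, show 5 * k + 5 * k = 10 * k by ring,
        show 2 * k + 6 * k = 8 * k by ring, show 4 * k + 6 * k = 10 * k by ring]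
      linear_combination (-(b ^ 2 ^ (5 * k) * (u ^ 2 ^ (8 * k) * u ^ 2 ^ (5 * k)) +
        b ^ 2 ^ (4 * k) * (u ^ 2 ^ (7 * k) * u ^ 2 ^ (4 * k)) +
        c ^ 2 ^ (5 * k) * (u ^ 2 ^ (10 * k) * u ^ 2 ^ (5 * k)) +
        c ^ 2 ^ (4 * k) * (u ^ 2 ^ (9 * k) * u ^ 2 ^ (4 * k)) +
        c ^ 2 ^ (3 * k) * (u ^ 2 ^ (8 * k) * u ^ 2 ^ (3 * k)) +
        c ^ 2 ^ (2 * k) * (u ^ 2 ^ (7 * k) * u ^ 2 ^ (2 * k)))) * h2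
    constructor
    · intro hL0
      have hGG : G ^ 2 ^ (6 * k) + G ^ 2 ^ (5 * k) = 0 := by
        rw [← key, hL0, zero_pow (pow_ne_zero _ two_ne_zero), mul_zero]
      have hGe : G ^ 2 ^ (6 * k) = G ^ 2 ^ (5 * k) := by
        rw [CharTwo.add_eq_iff_eq_add, zero_add] at hGG
        exact hGG
      have hstep : (G ^ 2 ^ k) ^ 2 ^ (5 * k) = G ^ 2 ^ (5 * k) := by
        rw [← pow_mul, ← Nat.pow_add, show k + 5 * k = 6 * k by ring]
        exact hGe
      have hfix : G ^ 2 ^ k = G := frob_inj (5 * k) hstep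
      exact fixed_aux hn hkn G hfix
    · intro hG01
      have hfix : G ^ 2 ^ k = G := by
        rcases hG01 with h0 | h0 <;> rw [h0]
        · exact zero_pow (pow_ne_zero _ two_ne_zero)
        · exact one_pow _
      have hstep : (G ^ 2 ^ k) ^ 2 ^ (5 * k) = G ^ 2 ^ (5 * k) := by rw [hfix]
      have hGe : G ^ 2 ^ (6 * k) = G ^ 2 ^ (5 * k) := by
        rw [← hstep, ← pow_mul, ← Nat.pow_add, show k + 5 * k = 6 * k by ring]
      have hGG : u ^ 2 ^ (6 * k) * Lu ^ 2 ^ (6 * k) = 0 := by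
        rw [key, hGe, ← two_mul, h2, zero_mul]
      rcases mul_eq_zero.mp hGG with h0 | h0
      · exact absurd (pow_eq_zero_iff (pow_ne_zero _ two_ne_zero) |>.mp h0) hu
      · exact pow_eq_zero_iff (pow_ne_zero _ two_ne_zero) |>.mp h0
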